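/- The function J satisfies J′(1/2) = 0, J″(1/2) = 0, J‴(1/2) = 0, J^{(5)}(1/2) = 0, J^{(7)}(1/2) = 0, and J″(t) < 0 for every t ∈ (0, 1) with t ≠ 1/2. -/

import Mathlib

/-- The entropy-like function `I(t) = (t-1) log(1-t) - t log t`. -/
noncomputable def Ifun (t : ℝ) : ℝ := (t - 1) * Real.log (1 - t) - t * Real.log t

/-- `J(t) = I(t) + (2t-1)²/2`. -/
noncomputable def Jfun (t : ℝ) : ℝ := Ifun t + (2 * t - 1) ^ 2 / 2

open Set Real

noncomputable def gg1 (t : ℝ) : ℝ := Real.log (1 - t) - Real.log t + (4 * t - 2)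
noncomputable def gg2 (t : ℝ) : ℝ := 4 - (1 - t)⁻¹ - t⁻¹
noncomputable def gg3 (t : ℝ) : ℝ := (t ^ 2)⁻¹ - ((1 - t) ^ 2)⁻¹
noncomputable def gg4 (t : ℝ) : ℝ := -2 * (t ^ 3)⁻¹ - 2 * ((1 - t) ^ 3)⁻¹
noncomputable def gg5 (t : ℝ) : ℝ := 6 * (t ^ 4)⁻¹ - 6 * ((1 - t) ^ 4)⁻¹
noncomputable def gg6 (t : ℝ) : ℝ := -24 * (t ^ 5)⁻¹ - 24 * ((1 - t) ^ 5)⁻¹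
noncomputable def gg7 (t : ℝ) : ℝ := 120 * (t ^ 6)⁻¹ - 120 * ((1 - t) ^ 6)⁻¹

lemma h1t (t : ℝ) : HasDerivAt (fun x : ℝ => 1 - x) (-1) t := by
  exact ((hasDerivAt_const t (1:ℝ)).sub (hasDerivAt_id' t)).congr_deriv (by norm_num)

lemma hinvpow (n : ℕ) {t : ℝ} (ht : t ≠ 0) :
    HasDerivAt (fun x : ℝ => (x ^ n)⁻¹) (-(n * t ^ (n - 1)) / (t ^ n) ^ 2) t := by
  exact (hasDerivAt_pow n t).inv (pow_ne_zero n ht)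

lemma hinvpow' (n : ℕ) {t : ℝ} (ht : (1 : ℝ) - t ≠ 0) :
    HasDerivAt (fun x : ℝ => ((1 - x) ^ n)⁻¹)
      (-(n * (1 - t) ^ (n - 1) * (-1)) / ((1 - t) ^ n) ^ 2) t := by
  exact ((h1t t).pow n).inv (pow_ne_zero n ht)

lemma hJ : ∀ t ∈ Ioo (0:ℝ) 1, HasDerivAt Jfun (gg1 t) t := by
  intro t ht
  have ht0 : t ≠ 0 := ne_of_gt ht.1
  have ht1 : (1:ℝ) - t ≠ 0 := by have := ht.2; intro h; linarith [sub_eq_zero.mp h]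
  have hlog1 : HasDerivAt (fun x : ℝ => Real.log (1 - x)) ((1 - t)⁻¹ * (-1)) t :=
    (Real.hasDerivAt_log ht1).comp t (h1t t)
  have hp1 : HasDerivAt (fun x : ℝ => (x - 1) * Real.log (1 - x))
      (1 * Real.log (1 - t) + (t - 1) * ((1 - t)⁻¹ * (-1))) t :=
    ((hasDerivAt_id t).sub_const 1).mul hlog1
  have hp2 : HasDerivAt (fun x : ℝ => x * Real.log x)
      (1 * Real.log t + t * t⁻¹) t :=
    (hasDerivAt_id t).mul (Real.hasDerivAt_log ht0)
  have hsq : HasDerivAt (fun x : ℝ => (2 * x - 1) ^ 2 / 2)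
      ((2 * (2 * t - 1) ^ 1 * 2) / 2) t := by
    have h := (((hasDerivAt_id t).const_mul 2).sub_const 1).pow 2
    simpa using h.div_const 2
  have H := (hp1.sub hp2).add hsq
  have hfe : Jfun = fun x : ℝ =>
      (x - 1) * Real.log (1 - x) - x * Real.log x + (2 * x - 1) ^ 2 / 2 := by
    funext x; simp [Jfun, Ifun]
  rw [hfe]
  refine H.congr_deriv ?_
  unfold gg1
  field_simp
  ring

lemma hg1 : ∀ t ∈ Ioo (0:ℝ) 1, HasDerivAt gg1 (gg2 t) t := by
  intro t ht
  have ht0 : t ≠ 0 := ne_of_gt ht.1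
  have ht1 : (1:ℝ) - t ≠ 0 := by have := ht.2; intro h; linarith [sub_eq_zero.mp h]
  have hlog1 : HasDerivAt (fun x : ℝ => Real.log (1 - x)) ((1 - t)⁻¹ * (-1)) t :=
    (Real.hasDerivAt_log ht1).comp t (h1t t)
  have hlin : HasDerivAt (fun x : ℝ => 4 * x - 2) 4 t := by
    simpa using ((hasDerivAt_id t).const_mul 4).sub_const 2
  have H := (hlog1.sub (Real.hasDerivAt_log ht0)).add hlin
  have hfe : gg1 = fun x : ℝ => Real.log (1 - x) - Real.log x + (4 * x - 2) := rfl
  rw [hfe]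
  refine H.congr_deriv ?_
  unfold gg2
  field_simp
  ring

lemma hg2 : ∀ t ∈ Ioo (0:ℝ) 1, HasDerivAt gg2 (gg3 t) t := by
  intro t ht
  have ht0 : t ≠ 0 := ne_of_gt ht.1
  have ht1 : (1:ℝ) - t ≠ 0 := by have := ht.2; intro h; linarith [sub_eq_zero.mp h]
  have H := ((hasDerivAt_const t (4:ℝ)).sub ((h1t t).inv ht1)).sub ((hasDerivAt_id t).inv ht0)
  have hfe : gg2 = fun x : ℝ => 4 - (1 - x)⁻¹ - x⁻¹ := rfl
  rw [hfe]
  refine H.congr_deriv ?_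
  unfold gg3 id
  field_simp
  ring

lemma hg3 : ∀ t ∈ Ioo (0:ℝ) 1, HasDerivAt gg3 (gg4 t) t := by
  intro t ht
  have ht0 : t ≠ 0 := ne_of_gt ht.1
  have ht1 : (1:ℝ) - t ≠ 0 := by have := ht.2; intro h; linarith [sub_eq_zero.mp h]
  have H := (hinvpow 2 ht0).sub (hinvpow' 2 ht1)
  have hfe : gg3 = fun x : ℝ => (x ^ 2)⁻¹ - ((1 - x) ^ 2)⁻¹ := rfl
  rw [hfe]
  refine H.congr_deriv ?_
  unfold gg4
  field_simp
  ring

lemma hg4 : ∀ t ∈ Ioo (0:ℝ) 1, HasDerivAt gg4 (gg5 t) t := by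
  intro t ht
  have ht0 : t ≠ 0 := ne_of_gt ht.1
  have ht1 : (1:ℝ) - t ≠ 0 := by have := ht.2; intro h; linarith [sub_eq_zero.mp h]
  have H := ((hinvpow 3 ht0).const_mul (-2 : ℝ)).sub ((hinvpow' 3 ht1).const_mul (2 : ℝ))
  have hfe : gg4 = fun x : ℝ => -2 * (x ^ 3)⁻¹ - 2 * ((1 - x) ^ 3)⁻¹ := rfl
  rw [hfe]
  refine H.congr_deriv ?_
  unfold gg5
  field_simp
  ring

lemma hg5 : ∀ t ∈ Ioo (0:ℝ) 1, HasDerivAt gg5 (gg6 t) t := by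
  intro t ht
  have ht0 : t ≠ 0 := ne_of_gt ht.1
  have ht1 : (1:ℝ) - t ≠ 0 := by have := ht.2; intro h; linarith [sub_eq_zero.mp h]
  have H := ((hinvpow 4 ht0).const_mul (6 : ℝ)).sub ((hinvpow' 4 ht1).const_mul (6 : ℝ))
  have hfe : gg5 = fun x : ℝ => 6 * (x ^ 4)⁻¹ - 6 * ((1 - x) ^ 4)⁻¹ := rfl
  rw [hfe]
  refine H.congr_deriv ?_
  unfold gg6
  field_simp
  ring

lemma hg6 : ∀ t ∈ Ioo (0:ℝ) 1, HasDerivAt gg6 (gg7 t) t := by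
  intro t ht
  have ht0 : t ≠ 0 := ne_of_gt ht.1
  have ht1 : (1:ℝ) - t ≠ 0 := by have := ht.2; intro h; linarith [sub_eq_zero.mp h]
  have H := ((hinvpow 5 ht0).const_mul (-24 : ℝ)).sub ((hinvpow' 5 ht1).const_mul (24 : ℝ))
  have hfe : gg6 = fun x : ℝ => -24 * (x ^ 5)⁻¹ - 24 * ((1 - x) ^ 5)⁻¹ := rfl
  rw [hfe]
  refine H.congr_deriv ?_
  unfold gg7
  field_simp
  ring

lemma step {f g g' : ℝ → ℝ} (hfg : ∀ t ∈ Ioo (0:ℝ) 1, f t = g t)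
    (hg : ∀ t ∈ Ioo (0:ℝ) 1, HasDerivAt g (g' t) t) :
    ∀ t ∈ Ioo (0:ℝ) 1, deriv f t = g' t := by
  intro t ht
  have hev : f =ᶠ[nhds t] g := Filter.eventuallyEq_of_mem (isOpen_Ioo.mem_nhds ht) hfg
  rw [hev.deriv_eq]
  exact (hg t ht).deriv

lemma e1 : ∀ t ∈ Ioo (0:ℝ) 1, deriv Jfun t = gg1 t := fun t ht => (hJ t ht).deriv
lemma e2 : ∀ t ∈ Ioo (0:ℝ) 1, deriv (deriv Jfun) t = gg2 t := step e1 hg1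
lemma e3 : ∀ t ∈ Ioo (0:ℝ) 1, deriv (deriv (deriv Jfun)) t = gg3 t := step e2 hg2
lemma e4 : ∀ t ∈ Ioo (0:ℝ) 1, deriv (deriv (deriv (deriv Jfun))) t = gg4 t := step e3 hg3
lemma e5 : ∀ t ∈ Ioo (0:ℝ) 1, deriv (deriv (deriv (deriv (deriv Jfun)))) t = gg5 t :=
  step e4 hg4
lemma e6 : ∀ t ∈ Ioo (0:ℝ) 1,
    deriv (deriv (deriv (deriv (deriv (deriv Jfun))))) t = gg6 t := step e5 hg5
lemma e7 : ∀ t ∈ Ioo (0:ℝ) 1,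
    deriv (deriv (deriv (deriv (deriv (deriv (deriv Jfun)))))) t = gg7 t := step e6 hg6

theorem Jfun_derivatives_at_half :
    deriv Jfun (1 / 2) = 0 ∧
    iteratedDeriv 2 Jfun (1 / 2) = 0 ∧
    iteratedDeriv 3 Jfun (1 / 2) = 0 ∧
    iteratedDeriv 5 Jfun (1 / 2) = 0 ∧
    iteratedDeriv 7 Jfun (1 / 2) = 0 ∧
    ∀ t ∈ Set.Ioo (0 : ℝ) 1, t ≠ 1 / 2 → iteratedDeriv 2 Jfun t < 0 := by
  have hmem : (1/2 : ℝ) ∈ Ioo (0:ℝ) 1 := by norm_num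
  have it2 : ∀ t ∈ Ioo (0:ℝ) 1, iteratedDeriv 2 Jfun t = gg2 t := by
    intro t ht
    rw [show (2:ℕ) = 1 + 1 from rfl, iteratedDeriv_succ, iteratedDeriv_one]
    exact e2 t ht
  refine ⟨?_, ?_, ?_, ?_, ?_, ?_⟩
  · rw [e1 _ hmem]; norm_num [gg1]
  · rw [it2 _ hmem]; norm_num [gg2]
  · rw [show (3:ℕ) = 2 + 1 from rfl, iteratedDeriv_succ,
      show (2:ℕ) = 1 + 1 from rfl, iteratedDeriv_succ, iteratedDeriv_one]
    rw [e3 _ hmem]; norm_num [gg3]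
  · simp only [show (5:ℕ) = 1+1+1+1+1 from rfl, iteratedDeriv_succ, iteratedDeriv_one, iteratedDeriv_zero]
    rw [e5 _ hmem]; norm_num [gg5]
  · simp only [show (7:ℕ) = 1+1+1+1+1+1+1 from rfl, iteratedDeriv_succ, iteratedDeriv_one, iteratedDeriv_zero]
    rw [e7 _ hmem]; norm_num [gg7]
  · intro t ht htne
    rw [it2 t ht]
    have ht0 : 0 < t := ht.1
    have ht1 : t < 1 := ht.2
    have h : gg2 t = -((2*t-1)^2) / (t * (1 - t)) := by
      have h0 : t ≠ 0 := ne_of_gt ht0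
      have h1 : (1:ℝ) - t ≠ 0 := by intro h; linarith [sub_eq_zero.mp h]
      unfold gg2
      field_simp
      ring
    rw [h]
    apply div_neg_of_neg_of_pos
    · have : (2*t - 1) ≠ 0 := by
        intro h; apply htne; linarith
      have h2 : 0 < (2*t-1)^2 := lt_of_le_of_ne (sq_nonneg _) (Ne.symm (pow_ne_zero 2 this))
      linarith
    · nlinarith
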